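/- arXiv:1206.1897 — 2 statements merged into one kernel-verified Lean document; each statement's English description precedes it below -/
import Mathlib

section
/- Let k ≥ 2 be an even integer and let D be a k-quasi-transitive digraph with a unique initial strong component C. If v is a vertex of C satisfying Δ⁺_C ≥ d⁺(v) > Δ⁺_C − k (out-degrees taken in C), then v is a (k+1)-king of D. -/
variable {V : Type*}

/-- A directed path of length `n` from `u` to `v` in the digraph with arc relation `A`:
a sequence of `n + 1` pairwise distinct vertices, consecutive ones joined by arcs. -/
def HasPathN (A : V → V → Prop) (u v : V) (n : ℕ) : Prop :=
  ∃ f : Fin (n + 1) → V, Function.Injective f ∧ f 0 = u ∧ f (Fin.last n) = v ∧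
    ∀ i : Fin n, A (f i.castSucc) (f i.succ)

/-- The distance from `u` to `v`: the length of a shortest directed path from `u` to `v`,
`⊤` if there is no such path. -/
noncomputable def ddist (A : V → V → Prop) (u v : V) : ℕ∞ :=
  sInf {n : ℕ∞ | ∃ m : ℕ, n = (m : ℕ∞) ∧ HasPathN A u v m}

/-- `D` is `k`-quasi-transitive if for every directed path `(v_0, …, v_k)` of length `k`,
either `(v_0, v_k)` or `(v_k, v_0)` is an arc. -/
def KQuasiTrans (A : V → V → Prop) (k : ℕ) : Prop :=
  ∀ u v : V, HasPathN A u v k → A u v ∨ A v u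

/-- A vertex `v` is an `r`-king if every vertex is within distance `r` from `v`. -/
def IsRKing (A : V → V → Prop) (r : ℕ) (v : V) : Prop :=
  ∀ u : V, ddist A v u ≤ (r : ℕ∞)

/-- `u` reaches `v` by a directed path. -/
def Reaches (A : V → V → Prop) (u v : V) : Prop :=
  ∃ n : ℕ, HasPathN A u v n

/-- A strong component: the set of all vertices mutually reachable with some vertex. -/
def IsStrongComponent (A : V → V → Prop) (S : Set V) : Prop :=
  ∃ v : V, S = {u | Reaches A u v ∧ Reaches A v u}

/-- An initial strong component: a strong component receiving no arcs from outside. -/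
def IsInitialStrongComponent (A : V → V → Prop) (S : Set V) : Prop :=
  IsStrongComponent A S ∧ ∀ u v : V, u ∉ S → v ∈ S → ¬ A u v

/-- The out-degree of `v` in `D`. -/
noncomputable def outDeg (A : V → V → Prop) (v : V) : ℕ :=
  {u : V | A v u}.ncard

/-- The out-degree of `v` in the subdigraph of `D` induced by `C`. -/
noncomputable def outDegIn (A : V → V → Prop) (C : Set V) (v : V) : ℕ :=
  {u ∈ C | A v u}.ncard

/-- The maximum out-degree of the subdigraph induced by `C`. -/
noncomputable def maxOutDegIn (A : V → V → Prop) (C : Set V) : ℕ :=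
  sSup (outDegIn A C '' C)

def IsNatWalk (A : V → V → Prop) (F : ℕ → V) (n : ℕ) : Prop := ∀ i, i < n → A (F i) (F (i+1))

lemma path_of_fun (A : V → V → Prop) {F : ℕ → V} {n : ℕ}
    (inj : ∀ i j, i ≤ n → j ≤ n → F i = F j → i = j)
    (arcs : IsNatWalk A F n) :
    HasPathN A (F 0) (F n) n := by
  refine ⟨fun i => F i.val, fun a b h => ?_, rfl, rfl, fun i => ?_⟩
  · exact Fin.ext (inj a.val b.val (Nat.lt_succ_iff.mp a.isLt) (Nat.lt_succ_iff.mp b.isLt) h)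
  · exact arcs i.val i.isLt

lemma fun_of_path (A : V → V → Prop) {u v : V} {n : ℕ} (h : HasPathN A u v n) :
    ∃ F : ℕ → V, F 0 = u ∧ F n = v ∧
      (∀ i j, i ≤ n → j ≤ n → F i = F j → i = j) ∧ IsNatWalk A F n := by
  obtain ⟨f, hinj, h0, hl, harc⟩ := h
  refine ⟨fun t => f ⟨min t n, by omega⟩, ?_, ?_, ?_, ?_⟩
  · beta_reduce
    have e : (⟨min 0 n, by omega⟩ : Fin (n+1)) = 0 := by ext; simp
    rw [e, h0]
  · beta_reduce
    have e : (⟨min n n, by omega⟩ : Fin (n+1)) = Fin.last n := by ext; simp [Fin.last]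
    rw [e, hl]
  · intro i j hi hj hF
    have h2 := congrArg Fin.val (hinj hF)
    simpa [Nat.min_eq_left hi, Nat.min_eq_left hj] using h2
  · intro t ht
    beta_reduce
    have e1 : (⟨min t n, by omega⟩ : Fin (n+1)) = (⟨t, ht⟩ : Fin n).castSucc := by
      ext; simp [Nat.min_eq_left (by omega : t ≤ n)]
    have e2 : (⟨min (t+1) n, by omega⟩ : Fin (n+1)) = (⟨t, ht⟩ : Fin n).succ := by
      ext; simp [Nat.min_eq_left (by omega : t+1 ≤ n)]
    rw [e1, e2]
    exact harc ⟨t, ht⟩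

lemma walk_concat (A : V → V → Prop) {f g : ℕ → V} {a b : ℕ}
    (hf : IsNatWalk A f a) (hg : IsNatWalk A g b) (hlink : f a = g 0) :
    ∃ h : ℕ → V, h 0 = f 0 ∧ h (a + b) = g b ∧ IsNatWalk A h (a + b) := by
  refine ⟨fun t => if t ≤ a then f t else g (t - a), by simp, ?_, ?_⟩
  · beta_reduce
    by_cases hb : b = 0
    · subst hb; simp [hlink]
    · rw [if_neg (by omega)]
      congr 1
      omega
  · intro t ht
    beta_reduce
    by_cases h1 : t + 1 ≤ a
    · rw [if_pos (by omega), if_pos h1]; exact hf t (by omega)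
    · by_cases h2 : t ≤ a
      · have hta : t = a := by omega
        subst hta
        rw [if_pos le_rfl, if_neg h1, hlink]
        have e : t + 1 - t = 1 := by omega
        rw [e]
        exact hg 0 (by omega)
      · rw [if_neg h2, if_neg (by omega)]
        have e1 : t + 1 - a = (t - a) + 1 := by omega
        rw [e1]
        exact hg (t - a) (by omega)

lemma walk_shorten (A : V → V → Prop) :
    ∀ (n : ℕ) (F : ℕ → V), IsNatWalk A F n → ∃ m ≤ n, HasPathN A (F 0) (F n) m := by
  intro n
  induction n using Nat.strong_induction_on with
  | _ n ih =>
    intro F hF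
    by_cases hinj : ∀ i j, i ≤ n → j ≤ n → F i = F j → i = j
    · exact ⟨n, le_refl n, path_of_fun A hinj hF⟩
    · push_neg at hinj
      obtain ⟨i0, j0, hi0, hj0, heq0, hne0⟩ := hinj
      have key : ∀ i j : ℕ, i < j → j ≤ n → F i = F j →
          ∃ m ≤ n, HasPathN A (F 0) (F n) m := by
        intro i j hij hj heq
        have hd1 : 1 ≤ j - i := by omega
        have hdn : j - i ≤ n := by omega
        have hwalk : IsNatWalk A (fun t => if t ≤ i then F t else F (t + (j - i))) (n - (j - i)) := by
          intro t ht
          beta_reduce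
          by_cases h1 : t + 1 ≤ i
          · rw [if_pos (by omega), if_pos h1]; exact hF t (by omega)
          · by_cases h2 : t ≤ i
            · have hti : t = i := by omega
              subst hti
              rw [if_pos le_rfl, if_neg h1, heq]
              have e : t + 1 + (j - t) = j + 1 := by omega
              rw [e]
              exact hF j (by omega)
            · rw [if_neg h2, if_neg (by omega)]
              have e : t + 1 + (j - i) = (t + (j - i)) + 1 := by omega
              rw [e]
              exact hF (t + (j - i)) (by omega)
        obtain ⟨m, hm, hp⟩ := ih (n - (j - i)) (by omega) _ hwalk
        refine ⟨m, by omega, ?_⟩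
        have e0 : (if 0 ≤ i then F 0 else F (0 + (j - i))) = F 0 := by rw [if_pos (by omega)]
        have en : (if n - (j - i) ≤ i then F (n - (j - i)) else F (n - (j - i) + (j - i))) = F n := by
          by_cases hni : n - (j - i) ≤ i
          · rw [if_pos hni]
            have : n = j := by omega
            subst this
            have : n - (n - i) = i := by omega
            rw [this, heq]
          · rw [if_neg hni]
            congr 1
            omega
        rwa [e0, en] at hp
      rcases Nat.lt_or_ge i0 j0 with hij | hij
      · exact key i0 j0 hij hj0 heq0
      · exact key j0 i0 (by omega) hi0 heq0.symm

lemma reaches_iff_walk (A : V → V → Prop) {a b : V} :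
    Reaches A a b ↔ ∃ n, ∃ F : ℕ → V, F 0 = a ∧ F n = b ∧ IsNatWalk A F n := by
  constructor
  · rintro ⟨n, hp⟩
    obtain ⟨F, h0, hn, _, hw⟩ := fun_of_path A hp
    exact ⟨n, F, h0, hn, hw⟩
  · rintro ⟨n, F, h0, hn, hw⟩
    obtain ⟨m, _, hp⟩ := walk_shorten A n F hw
    exact ⟨m, h0 ▸ hn ▸ hp⟩

lemma reaches_refl (A : V → V → Prop) (a : V) : Reaches A a a :=
  (reaches_iff_walk A).mpr ⟨0, fun _ => a, rfl, rfl, fun i hi => by omega⟩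

lemma reaches_trans (A : V → V → Prop) {a b c : V}
    (h1 : Reaches A a b) (h2 : Reaches A b c) : Reaches A a c := by
  rw [reaches_iff_walk] at h1 h2 ⊢
  obtain ⟨n1, f, hf0, hfn, hfw⟩ := h1
  obtain ⟨n2, g, hg0, hgn, hgw⟩ := h2
  obtain ⟨h, hh0, hhn, hhw⟩ := walk_concat A hfw hgw (by rw [hfn, hg0])
  exact ⟨n1 + n2, h, by rw [hh0, hf0], by rw [hhn, hgn], hhw⟩

lemma reaches_of_arc (A : V → V → Prop) {a b : V} (h : A a b) : Reaches A a b :=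
  (reaches_iff_walk A).mpr ⟨1, fun t => if t = 0 then a else b, by simp, by simp, by
    intro i hi
    have : i = 0 := by omega
    subst this
    simpa using h⟩

lemma reaches_of_initial [Fintype V] (A : V → V → Prop) {C : Set V}
    (hC : IsInitialStrongComponent A C)
    (huniq : ∀ S : Set V, IsInitialStrongComponent A S → S = C)
    {v : V} (hv : v ∈ C) (u : V) : Reaches A v u := by
  classical
  have hTne : ({w | Reaches A w u} : Set V).Nonempty := ⟨u, reaches_refl A u⟩
  obtain ⟨m, hmT, hmin⟩ := Set.exists_min_image {w | Reaches A w u}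
    (fun w => {z | Reaches A z w}.ncard) (Set.toFinite _) hTne
  have hkey : ∀ w, Reaches A w m → Reaches A m w := by
    intro w hw
    by_contra hmw
    have hwT : w ∈ {w | Reaches A w u} := reaches_trans A hw hmT
    have hsub : {z | Reaches A z w} ⊆ {z | Reaches A z m} :=
      fun z hz => reaches_trans A hz hw
    have hss : {z | Reaches A z w} ⊂ {z | Reaches A z m} := by
      rw [Set.ssubset_iff_of_subset hsub]
      exact ⟨m, reaches_refl A m, hmw⟩
    have hlt := Set.ncard_lt_ncard hss (Set.toFinite _)
    have := hmin w hwT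
    try simp only at this
    omega
  have hSinit : IsInitialStrongComponent A {z | Reaches A z m ∧ Reaches A m z} := by
    refine ⟨⟨m, rfl⟩, ?_⟩
    intro y z hy hz harc
    have hyRm : Reaches A y m := reaches_trans A (reaches_of_arc A harc) hz.1
    exact hy ⟨hyRm, hkey y hyRm⟩
  have hSC := huniq _ hSinit
  rw [← hSC] at hv
  exact reaches_trans A hv.1 hmT

lemma outDegIn_le_maxOutDegIn [Fintype V] (A : V → V → Prop) {C : Set V} {z : V} (hz : z ∈ C) :
    outDegIn A C z ≤ maxOutDegIn A C := by
  classical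
  exact le_csSup ((Set.toFinite C).image _).bddAbove ⟨z, hz, rfl⟩

/-- even `k ≥ 2`, unique initial strong component `C`; any vertex of `C`
whose out-degree in `C` exceeds `Δ⁺_C − k` is a `(k+1)`-king of `D`. -/
theorem kqt_even_degree_king
    [Fintype V] (A : V → V → Prop) (hloop : ∀ v : V, ¬ A v v)
    (k : ℕ) (hk : 2 ≤ k) (hke : Even k) (hqt : KQuasiTrans A k)
    (C : Set V) (hC : IsInitialStrongComponent A C)
    (huniq : ∀ S : Set V, IsInitialStrongComponent A S → S = C)
    (v : V) (hv : v ∈ C)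
    (hub : outDegIn A C v ≤ maxOutDegIn A C)
    (hlb : (maxOutDegIn A C : ℤ) - (k : ℤ) < (outDegIn A C v : ℤ)) :
    IsRKing A (k + 1) v := by
  classical
  intro u
  by_contra hcon
  have hreach : Reaches A v u := reaches_of_initial A hC huniq hv u
  have hPSne : {m : ℕ | HasPathN A v u m}.Nonempty := hreach
  set n₀ : ℕ := sInf {m : ℕ | HasPathN A v u m} with hn0
  have hmem : HasPathN A v u n₀ := Nat.sInf_mem hPSne
  have hminS : ∀ m, HasPathN A v u m → n₀ ≤ m := fun m hm => Nat.sInf_le hm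
  have hk2 : k + 2 ≤ n₀ := by
    by_contra h
    apply hcon
    refine le_trans (sInf_le ⟨n₀, rfl, hmem⟩) ?_
    exact_mod_cast (by omega : n₀ ≤ k + 1)
  obtain ⟨F, hF0, hFn, hFinj, hFw⟩ := fun_of_path A hmem
  -- no short walks from v to a path vertex
  have noshort : ∀ (G : ℕ → V) (L j : ℕ), j ≤ n₀ → G 0 = v → G L = F j → IsNatWalk A G L →
      j ≤ L := by
    intro G L j hj hG0 hGL hGw
    have hsuf : IsNatWalk A (fun t => F (j + t)) (n₀ - j) := by
      intro t ht
      beta_reduce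
      rw [show j + (t + 1) = (j + t) + 1 from by omega]
      exact hFw (j + t) (by omega)
    obtain ⟨H, hH0, hHL, hHw⟩ := walk_concat A hGw hsuf
      (by beta_reduce; rw [Nat.add_zero, hGL])
    obtain ⟨m, hmle, hp⟩ := walk_shorten A _ H hHw
    rw [hH0, hG0] at hp
    rw [hHL] at hp
    beta_reduce at hp
    rw [show j + (n₀ - j) = n₀ from by omega, hFn] at hp
    have := hminS m hp
    omega
  have noshortF : ∀ a b, a ≤ n₀ → b ≤ n₀ → A (F a) (F b) → b ≤ a + 1 := by
    intro a b ha hb harc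
    refine noshort (fun t => if t ≤ a then F t else F b) (a+1) b hb ?_ ?_ ?_
    · beta_reduce; rw [if_pos (by omega), hF0]
    · beta_reduce; rw [if_neg (by omega)]
    · intro t ht
      beta_reduce
      by_cases h1 : t + 1 ≤ a
      · rw [if_pos (by omega), if_pos h1]; exact hFw t (by omega)
      · have hta : t = a := by omega
        subst hta
        rw [if_pos le_rfl, if_neg h1]
        exact harc
  -- QT applications along reindexed subpaths
  have hQT : ∀ (σ : ℕ → ℕ) (p q : ℕ), σ 0 = p → σ k = q →
      (∀ a b, a ≤ k → b ≤ k → σ a = σ b → a = b) →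
      (∀ a, a ≤ k → σ a ≤ n₀) →
      (∀ t, t < k → A (F (σ t)) (F (σ (t+1)))) →
      A (F p) (F q) ∨ A (F q) (F p) := by
    intro σ p q hp hq hinj hle harc
    have := hqt _ _ (path_of_fun A
      (F := fun t => F (σ t))
      (fun a b ha hb h => hinj a b ha hb (hFinj _ _ (hle a ha) (hle b hb) h)) harc)
    beta_reduce at this
    rw [hp, hq] at this
    exact this
  have B0 : A (F k) (F 0) := by
    rcases hQT id 0 k rfl rfl (fun a b _ _ h => h) (fun a ha => (by omega : a ≤ n₀))
        (fun t ht => hFw t (by omega)) with h | h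
    · have := noshortF 0 k (by omega) (by omega) h; omega
    · exact h
  have B2 : A (F (k+2)) (F 2) := by
    rcases hQT (fun t => t + 2) 2 (k+2) rfl rfl
        (fun a b _ _ h => by have h' : a + 2 = b + 2 := h; omega)
        (fun a ha => (by omega : a + 2 ≤ n₀))
        (fun t ht => hFw (t+2) (by omega)) with h | h
    · have := noshortF 2 (k+2) (by omega) (by omega) h; omega
    · exact h
  -- rotation: from an arc F(k+2) → F j  (2 ≤ j ≤ k) deduce F(k+2) → F (j-2)
  have ROT : ∀ j, 2 ≤ j → j ≤ k → A (F (k+2)) (F j) → A (F (k+2)) (F (j-2)) := by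
    intro j hj2 hjk hyp
    have hor := hQT (fun t => if t = 0 then k + 2 else if t ≤ k - j + 1 then j + t - 1
        else t - (k - j + 2)) (k+2) (j-2) (by norm_num)
      (by beta_reduce
          rw [if_neg (by omega), if_neg (by omega)]
          omega)
      (fun a b ha hb h => by beta_reduce at h; split_ifs at h <;> omega)
      (fun a ha => by beta_reduce; split_ifs <;> omega)
      ?_
    · rcases hor with h | h
      · exact h
      · have := noshortF (j-2) (k+2) (by omega) (by omega) h; omega
    · intro t ht
      beta_reduce
      rcases (by omega : t = 0 ∨ (1 ≤ t ∧ t + 1 ≤ k - j + 1) ∨ t = k - j + 1 ∨ k - j + 2 ≤ t)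
        with h0 | ⟨h1, h2⟩ | h3 | h4
      · subst h0
        rw [if_pos rfl, if_neg (by omega : ¬ (0:ℕ) + 1 = 0), if_pos (by omega : 0 + 1 ≤ k - j + 1)]
        rw [show j + (0 + 1) - 1 = j from by omega]
        exact hyp
      · rw [if_neg (by omega : ¬ t = 0), if_pos (by omega : t ≤ k - j + 1),
          if_neg (by omega : ¬ t + 1 = 0), if_pos h2]
        rw [show j + (t + 1) - 1 = (j + t - 1) + 1 from by omega]
        exact hFw (j + t - 1) (by omega)
      · rw [if_neg (by omega : ¬ t = 0), if_pos (by omega : t ≤ k - j + 1),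
          if_neg (by omega : ¬ t + 1 = 0), if_neg (by omega : ¬ t + 1 ≤ k - j + 1)]
        rw [show j + t - 1 = k from by omega, show t + 1 - (k - j + 2) = 0 from by omega]
        exact B0
      · rw [if_neg (by omega : ¬ t = 0), if_neg (by omega : ¬ t ≤ k - j + 1),
          if_neg (by omega : ¬ t + 1 = 0), if_neg (by omega : ¬ t + 1 ≤ k - j + 1)]
        rw [show t + 1 - (k - j + 2) = (t - (k - j + 2)) + 1 from by omega]
        exact hFw (t - (k - j + 2)) (by omega)
  -- shift: from an arc F(k+2) → F j (j ≤ 1) deduce F(k+2) → F (j + k - 1)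
  have SHIFT : ∀ j, j ≤ 1 → A (F (k+2)) (F j) → A (F (k+2)) (F (j + k - 1)) := by
    intro j hj1 hyp
    have hor := hQT (fun t => if t = 0 then k + 2 else j + t - 1) (k+2) (j + k - 1)
      (by norm_num)
      (by beta_reduce; rw [if_neg (by omega)])
      (fun a b ha hb h => by beta_reduce at h; split_ifs at h <;> omega)
      (fun a ha => by beta_reduce; split_ifs <;> omega)
      ?_
    · rcases hor with h | h
      · exact h
      · have := noshortF (j + k - 1) (k+2) (by omega) (by omega) h; omega
    · intro t ht
      beta_reduce
      by_cases h0 : t = 0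
      · subst h0
        rw [if_pos rfl, if_neg (by omega : ¬ (0:ℕ) + 1 = 0)]
        rw [show j + (0 + 1) - 1 = j from by omega]
        exact hyp
      · rw [if_neg h0, if_neg (by omega : ¬ t + 1 = 0)]
        rw [show j + (t + 1) - 1 = (j + t - 1) + 1 from by omega]
        exact hFw (j + t - 1) (by omega)
  -- downward chain
  have hdown : ∀ (m j : ℕ), j + 2 * m ≤ k → A (F (k+2)) (F (j + 2 * m)) → A (F (k+2)) (F j) := by
    intro m
    induction m with
    | zero => intro j h hyp; simpa using hyp
    | succ m ih =>
      intro j h hyp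
      have step := ROT (j + 2 * (m+1)) (by omega) (by omega) hyp
      rw [show j + 2 * (m + 1) - 2 = j + 2 * m from by omega] at step
      exact ih j (by omega) step
  obtain ⟨r, hr⟩ := hke
  have P0 : A (F (k+2)) (F 0) := by
    have := hdown 1 0 (by omega) (by simpa using B2)
    simpa using this
  have Pkm1 : A (F (k+2)) (F (k-1)) := by
    have := SHIFT 0 (by omega) P0
    simpa using this
  have P1 : A (F (k+2)) (F 1) := by
    have := hdown (r - 1) 1 (by omega) ?_
    · exact this
    · rw [show 1 + 2 * (r - 1) = k - 1 from by omega]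
      exact Pkm1
  have Pk : A (F (k+2)) (F k) := by
    have := SHIFT 1 (by omega) P1
    rw [show 1 + k - 1 = k from by omega] at this
    exact this
  have ALL : ∀ j, j ≤ k → A (F (k+2)) (F j) := by
    intro j hj
    rcases Nat.even_or_odd j with ⟨s, hs⟩ | ⟨s, hs⟩
    · have := hdown (r - s) j (by omega) ?_
      · exact this
      · rw [show j + 2 * (r - s) = k from by omega]
        exact Pk
    · have := hdown (r - 1 - s) j (by omega) ?_
      · exact this
      · rw [show j + 2 * (r - 1 - s) = k - 1 from by omega]
        exact Pkm1
  -- every out-neighbour x of v is dominated by F (k+2)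
  have XARC : ∀ x : V, A v x → A (F (k+2)) x := by
    intro x hx
    have hxv : A (F 0) x := by rw [hF0]; exact hx
    have hxne : ∀ j, j ≤ n₀ → x = F j → j ≤ 1 := by
      intro j hj hxj
      exact noshortF 0 j (by omega) hj (by rw [← hxj]; exact hxv)
    have hx0 : x ≠ F 0 := by
      intro h
      exact hloop (F 0) (h ▸ hxv)
    have hpath : HasPathN A (F (k+2)) x k := by
      have := path_of_fun A (F := fun t => if t = 0 then F (k+2) else if t ≤ k - 2 then F (t+2)
        else if t = k - 1 then F 0 else x) (n := k) ?_ ?_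
      · have e0 : (if (0:ℕ) = 0 then F (k+2) else if (0:ℕ) ≤ k - 2 then F (0+2)
          else if (0:ℕ) = k - 1 then F 0 else x) = F (k+2) := by norm_num
        have ek : (if k = 0 then F (k+2) else if k ≤ k - 2 then F (k+2)
          else if k = k - 1 then F 0 else x) = x := by
          rw [if_neg (by omega), if_neg (by omega), if_neg (by omega)]
        rw [e0, ek] at this
        exact this
      · intro a b ha hb h
        beta_reduce at h
        split_ifs at h with c1 c2 c3 c4 c5 c6 c7 c8 c9 c10 c11 c12 c13 c14 c15 c16
        all_goals first
          | omega
          | (have := hFinj _ _ (by omega) (by omega) h; omega)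
          | (exact absurd (hxne _ (by omega) h.symm) (by omega))
          | (exact absurd (hxne _ (by omega) h) (by omega))
          | (exact absurd h.symm hx0)
          | (exact absurd h hx0)
      · intro t ht
        beta_reduce
        rcases (by omega : t = 0 ∨ (1 ≤ t ∧ t + 1 ≤ k - 2) ∨ (t = k - 2 ∧ 3 ≤ k) ∨ t = k - 1)
          with h0 | ⟨h1, h2⟩ | ⟨h3, h3k⟩ | h4
        · subst h0
          rw [if_pos rfl]
          by_cases hk3 : (0:ℕ) + 1 ≤ k - 2
          · rw [if_neg (by omega : ¬ (0:ℕ) + 1 = 0), if_pos hk3]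
            exact ALL (0 + 1 + 2) (by omega)
          · rw [if_neg (by omega : ¬ (0:ℕ) + 1 = 0), if_neg hk3,
              if_pos (by omega : (0:ℕ) + 1 = k - 1)]
            exact ALL 0 (by omega)
        · rw [if_neg (by omega : ¬ t = 0), if_pos (by omega : t ≤ k - 2),
            if_neg (by omega : ¬ t + 1 = 0), if_pos h2]
          rw [show t + 1 + 2 = (t + 2) + 1 from by omega]
          exact hFw (t + 2) (by omega)
        · rw [if_neg (by omega : ¬ t = 0), if_pos (by omega : t ≤ k - 2),
            if_neg (by omega : ¬ t + 1 = 0), if_neg (by omega : ¬ t + 1 ≤ k - 2),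
            if_pos (by omega : t + 1 = k - 1)]
          rw [show t + 2 = k from by omega]
          exact B0
        · rw [if_neg (by omega : ¬ t = 0), if_neg (by omega : ¬ t ≤ k - 2),
            if_pos (by omega : t = k - 1), if_neg (by omega : ¬ t + 1 = 0),
            if_neg (by omega : ¬ t + 1 ≤ k - 2), if_neg (by omega : ¬ t + 1 = k - 1)]
          exact hxv
    rcases hqt _ _ hpath with h | h
    · exact h
    · exfalso
      have : (k : ℕ) + 2 ≤ 2 := by
        refine noshort (fun t => if t = 0 then v else if t = 1 then x else F (k+2)) 2 (k+2)
          (by omega) (by beta_reduce; rw [if_pos rfl]) (by beta_reduce; norm_num) ?_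
        intro t ht
        beta_reduce
        rcases (by omega : t = 0 ∨ t = 1) with h0 | h1
        · subst h0
          rw [if_pos rfl, if_neg (by omega : ¬ (0:ℕ) + 1 = 0), if_pos (by omega : (0:ℕ) + 1 = 1)]
          exact hx
        · subst h1
          rw [if_neg (by omega : ¬ (1:ℕ) = 0), if_pos rfl, if_neg (by omega : ¬ (1:ℕ) + 1 = 0),
            if_neg (by omega : ¬ (1:ℕ) + 1 = 1)]
          exact h
      omega
  -- memberships in C
  obtain ⟨c, hCc⟩ := hC.1
  have hvc : Reaches A v c ∧ Reaches A c v := by rw [hCc] at hv; exact hv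
  have memC : ∀ z : V, Reaches A v z → Reaches A z v → z ∈ C := by
    intro z h1 h2
    rw [hCc]
    exact ⟨reaches_trans A h2 hvc.1, reaches_trans A hvc.2 h1⟩
  have RvF : ∀ j, j ≤ n₀ → Reaches A v (F j) := by
    intro j hj
    refine ⟨j, ?_⟩
    have := path_of_fun A (F := F) (n := j)
      (fun a b ha hb h => hFinj a b (by omega) (by omega) h) (fun t ht => hFw t (by omega))
    rwa [hF0] at this
  have RFv : ∀ j, j ≤ k → Reaches A (F j) v := by
    intro j hj
    rw [reaches_iff_walk]
    refine ⟨k - j + 1, fun t => if t ≤ k - j then F (j + t) else F 0, ?_, ?_, ?_⟩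
    · beta_reduce; rw [if_pos (by omega), Nat.add_zero]
    · beta_reduce; rw [if_neg (by omega), hF0]
    · intro t ht
      beta_reduce
      by_cases h1 : t + 1 ≤ k - j
      · rw [if_pos (by omega), if_pos h1]
        rw [show j + (t + 1) = (j + t) + 1 from by omega]
        exact hFw (j + t) (by omega)
      · rw [if_pos (by omega : t ≤ k - j), if_neg h1]
        rw [show j + t = k from by omega]
        exact B0
  have FmemC : ∀ j, j ≤ k → F j ∈ C := fun j hj => memC _ (RvF j (by omega)) (RFv j hj)
  have Fk2C : F (k+2) ∈ C := by
    refine memC _ (RvF (k+2) (by omega)) ?_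
    rw [reaches_iff_walk]
    refine ⟨1, fun t => if t = 0 then F (k+2) else v, by simp, by simp, ?_⟩
    intro t ht
    have : t = 0 := by omega
    subst this
    beta_reduce
    rw [if_pos rfl, if_neg (by omega : ¬ (0:ℕ) + 1 = 0), ← hF0]
    exact P0
  -- counting
  have hsub : ({y ∈ C | A v y} \ {F 1}) ∪ (F '' {j | j ≤ k}) ⊆ {y ∈ C | A (F (k+2)) y} := by
    rintro y (⟨⟨hyC, hyA⟩, -⟩ | ⟨j, hj, rfl⟩)
    · exact ⟨hyC, XARC y hyA⟩
    · exact ⟨FmemC j hj, ALL j hj⟩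
  have hdisj : Disjoint ({y ∈ C | A v y} \ {F 1}) (F '' {j | j ≤ k}) := by
    rw [Set.disjoint_left]
    rintro y ⟨⟨hyC, hyA⟩, hy1⟩ ⟨j, hj, rfl⟩
    have hjk : j ≤ k := hj
    have hAF : A (F 0) (F j) := by rw [hF0]; exact hyA
    rcases Nat.eq_zero_or_pos j with h0 | hpos
    · subst h0; exact hloop (F 0) hAF
    · have := noshortF 0 j (by omega) (by omega) hAF
      have : j = 1 := by omega
      subst this
      exact hy1 rfl
  have hcard1 : (F '' {j | j ≤ k}).ncard = k + 1 := by
    rw [Set.ncard_image_of_injOn (fun a ha b hb h => hFinj a b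
      (by have h' : a ≤ k := by simpa using ha
          omega)
      (by have h' : b ≤ k := by simpa using hb
          omega) h)]
    rw [show ({j | j ≤ k} : Set ℕ) = ↑(Finset.Iic k) from by ext; simp]
    rw [Set.ncard_coe_finset, Nat.card_Iic]
  have hNle : ({y ∈ C | A v y}).ncard ≤ ({y ∈ C | A v y} \ {F 1}).ncard + 1 := by
    have h1 : ({y ∈ C | A v y}) ⊆ ({y ∈ C | A v y} \ {F 1}) ∪ {F 1} := by
      intro y hy
      by_cases h : y = F 1
      · exact Or.inr h
      · exact Or.inl ⟨hy, h⟩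
    calc ({y ∈ C | A v y}).ncard ≤ (({y ∈ C | A v y} \ {F 1}) ∪ {F 1}).ncard :=
          Set.ncard_le_ncard h1 (Set.toFinite _)
      _ ≤ ({y ∈ C | A v y} \ {F 1}).ncard + ({F 1} : Set V).ncard := Set.ncard_union_le _ _
      _ = ({y ∈ C | A v y} \ {F 1}).ncard + 1 := by rw [Set.ncard_singleton]
  have hMge : ({y ∈ C | A v y} \ {F 1}).ncard + (k + 1) ≤ ({y ∈ C | A (F (k+2)) y}).ncard := by
    have := Set.ncard_le_ncard hsub (Set.toFinite _)
    rwa [Set.ncard_union_eq hdisj (Set.toFinite _) (Set.toFinite _), hcard1] at this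
  have hdv : outDegIn A C v = ({y ∈ C | A v y}).ncard := rfl
  have hdF : outDegIn A C (F (k+2)) = ({y ∈ C | A (F (k+2)) y}).ncard := rfl
  have hFle : outDegIn A C (F (k+2)) ≤ maxOutDegIn A C := outDegIn_le_maxOutDegIn A Fk2C
  rw [hdF] at hFle
  rw [hdv] at hlb
  omega
end

section
/- Let k ≥ 3 be an odd integer. Every k-quasi-transitive digraph D has a (k+2)-kernel, i.e., a set S of vertices such that d(u,v) ≥ k+2 for all distinct u,v ∈ S, and for every vertex u ∉ S there exists v ∈ S with d(u,v) ≤ k+1. -/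
variable {V : Type*}

section Aux

variable {A : V → V → Prop} {k : ℕ}

private def NWalk (A : V → V → Prop) (g : ℕ → V) (n : ℕ) : Prop := ∀ i < n, A (g i) (g (i+1))

private def NPath (A : V → V → Prop) (g : ℕ → V) (n : ℕ) : Prop :=
  NWalk A g n ∧ Set.InjOn g (Set.Iic n)

private lemma hasPathN_iff {u v : V} {n : ℕ} :
    HasPathN A u v n ↔ ∃ g : ℕ → V, NPath A g n ∧ g 0 = u ∧ g n = v := by
  constructor
  · rintro ⟨f, hinj, h0, hl, harc⟩
    refine ⟨fun i => f ⟨min i n, by omega⟩, ⟨?_, ?_⟩, ?_, ?_⟩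
    · intro i hi
      have h1 : (⟨min i n, by omega⟩ : Fin (n+1)) = Fin.castSucc ⟨i, hi⟩ := by
        apply Fin.ext; simp [Fin.castSucc]; omega
      have h2 : (⟨min (i+1) n, by omega⟩ : Fin (n+1)) = Fin.succ ⟨i, hi⟩ := by
        apply Fin.ext; simp [Fin.succ]; omega
      show A (f ⟨min i n, by omega⟩) (f ⟨min (i+1) n, by omega⟩)
      rw [h1, h2]
      exact harc ⟨i, hi⟩
    · intro x hx y hy hxy
      simp only [Set.mem_Iic] at hx hy
      have := congrArg Fin.val (hinj hxy)
      simp only at this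
      omega
    · have h1 : (⟨min 0 n, by omega⟩ : Fin (n+1)) = 0 := by
        apply Fin.ext; simp
      show f ⟨min 0 n, by omega⟩ = u
      rw [h1, h0]
    · have h1 : (⟨min n n, by omega⟩ : Fin (n+1)) = Fin.last n := by
        apply Fin.ext; simp [Fin.last]
      show f ⟨min n n, by omega⟩ = v
      rw [h1, hl]
  · rintro ⟨g, ⟨hw, hinj⟩, h0, hn⟩
    refine ⟨fun t => g t.val, ?_, by simpa using h0, by simpa [Fin.last] using hn, ?_⟩
    · intro a b hab
      exact Fin.ext (hinj (Set.mem_Iic.mpr (Nat.lt_succ_iff.mp a.isLt))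
        (Set.mem_Iic.mpr (Nat.lt_succ_iff.mp b.isLt)) hab)
    · intro i
      simpa using hw i.val i.isLt

private lemma ddist_le_of_path {u v : V} {m : ℕ} (h : HasPathN A u v m) :
    ddist A u v ≤ (m : ℕ∞) := sInf_le ⟨m, rfl, h⟩

private lemma pathN_zero (u : V) : HasPathN A u u 0 :=
  ⟨fun _ => u, fun a b _ => Fin.ext (by omega), rfl, rfl, fun i => i.elim0⟩

private lemma ddist_self (u : V) : ddist A u u = 0 := by
  have h := ddist_le_of_path (pathN_zero u (A := A))
  exact le_antisymm (by simpa using h) zero_le'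

private lemma ddist_spec {u v : V} (h : ddist A u v ≠ ⊤) :
    ∃ n : ℕ, ddist A u v = (n : ℕ∞) ∧ HasPathN A u v n ∧ ∀ m, HasPathN A u v m → n ≤ m := by
  have hne : {n : ℕ∞ | ∃ m : ℕ, n = (m : ℕ∞) ∧ HasPathN A u v m}.Nonempty := by
    by_contra hc
    rw [Set.not_nonempty_iff_eq_empty] at hc
    exact h (by rw [ddist, hc, sInf_empty])
  have hNne : {m : ℕ | HasPathN A u v m}.Nonempty := by
    obtain ⟨x, m, rfl, hm⟩ := hne; exact ⟨m, hm⟩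
  have hmem := Nat.sInf_mem hNne
  refine ⟨sInf {m : ℕ | HasPathN A u v m}, ?_, hmem, fun m hm => Nat.sInf_le hm⟩
  apply le_antisymm
  · exact sInf_le ⟨_, rfl, hmem⟩
  · apply le_sInf
    rintro b ⟨m, rfl, hm⟩
    exact_mod_cast Nat.sInf_le hm

private lemma nwalk_shortcut {u v : V} :
    ∀ n : ℕ, ∀ g : ℕ → V, NWalk A g n → g 0 = u → g n = v → ∃ m ≤ n, HasPathN A u v m := by
  intro n
  induction n using Nat.strong_induction_on with
  | _ n IH =>
    intro g hw h0 hn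
    by_cases hinj : Set.InjOn g (Set.Iic n)
    · exact ⟨n, le_rfl, hasPathN_iff.mpr ⟨g, ⟨hw, hinj⟩, h0, hn⟩⟩
    · have hex : ∃ i j, i < j ∧ j ≤ n ∧ g i = g j := by
        by_contra hc
        push_neg at hc
        apply hinj
        intro x hx y hy hxy
        simp only [Set.mem_Iic] at hx hy
        rcases lt_trichotomy x y with h | h | h
        · exact absurd hxy (hc x y h hy)
        · exact h
        · exact absurd hxy.symm (hc y x h hx)
      obtain ⟨i, j, hij, hjn, he⟩ := hex
      set g' : ℕ → V := fun t => if t ≤ i then g t else g (t + (j - i)) with hg'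
      have h0' : g' 0 = u := by simp only [hg', if_pos (Nat.zero_le i)]; exact h0
      have harc : NWalk A g' (n - (j - i)) := by
        intro t ht
        rcases lt_trichotomy t i with hti | hti | hti
        · simp only [hg', if_pos (le_of_lt hti), if_pos (Nat.succ_le_of_lt hti)]
          exact hw t (by omega)
        · subst hti
          simp only [hg', if_pos le_rfl, if_neg (by omega : ¬ t + 1 ≤ t)]
          rw [he, show t + 1 + (j - t) = j + 1 by omega]
          exact hw j (by omega)
        · simp only [hg', if_neg (by omega : ¬ t ≤ i), if_neg (by omega : ¬ t + 1 ≤ i)]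
          rw [show t + 1 + (j - i) = (t + (j - i)) + 1 by omega]
          exact hw (t + (j - i)) (by omega)
      have hn' : g' (n - (j - i)) = v := by
        by_cases hc : n - (j - i) ≤ i
        · have hji : j = n := by omega
          have hii : n - (j - i) = i := by omega
          rw [hg']
          simp only [hii, if_pos le_rfl]
          rw [he, hji, hn]
        · simp only [hg', if_neg hc]
          rw [show n - (j - i) + (j - i) = n by omega, hn]
      obtain ⟨m, hm, hp⟩ := IH (n - (j - i)) (by omega) g' harc h0' hn'
      exact ⟨m, by omega, hp⟩

private lemma ddist_triangle (u v w : V) :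
    ddist A u w ≤ ddist A u v + ddist A v w := by
  by_cases h1 : ddist A u v = ⊤
  · simp [h1]
  by_cases h2 : ddist A v w = ⊤
  · simp [h2]
  obtain ⟨a, ha, hpa, _⟩ := ddist_spec h1
  obtain ⟨b, hb, hpb, _⟩ := ddist_spec h2
  obtain ⟨g1, hp1, h10, h1n⟩ := hasPathN_iff.mp hpa
  obtain ⟨g2, hp2, h20, h2n⟩ := hasPathN_iff.mp hpb
  set g : ℕ → V := fun t => if t ≤ a then g1 t else g2 (t - a) with hg
  have hwalk : NWalk A g (a + b) := by
    intro i hi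
    by_cases hc : i + 1 ≤ a
    · simp only [hg, if_pos (by omega : i ≤ a), if_pos hc]
      exact hp1.1 i (by omega)
    · by_cases hc2 : i ≤ a
      · have hia : i = a := by omega
        simp only [hg, if_pos hc2, if_neg hc]
        rw [hia, show a + 1 - a = 1 by omega, h1n, ← h20]
        exact hp2.1 0 (by omega)
      · simp only [hg, if_neg hc2, if_neg hc]
        rw [show i + 1 - a = (i - a) + 1 by omega]
        exact hp2.1 (i - a) (by omega)
  have hg0 : g 0 = u := by simp only [hg, if_pos (Nat.zero_le a)]; exact h10
  have hgn : g (a + b) = w := by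
    by_cases hb0 : b = 0
    · have hvw : v = w := by rw [← h20]; rw [hb0] at h2n; exact h2n
      simp only [hg, if_pos (by omega : a + b ≤ a)]
      rw [show a + b = a by omega, h1n, hvw]
    · simp only [hg, if_neg (by omega : ¬ a + b ≤ a)]
      rw [show a + b - a = b by omega, h2n]
  obtain ⟨m, hm, hp⟩ := nwalk_shortcut (A := A) (a + b) g hwalk hg0 hgn
  calc ddist A u w ≤ (m : ℕ∞) := ddist_le_of_path hp
    _ ≤ ((a + b : ℕ) : ℕ∞) := by exact_mod_cast hm
    _ = ddist A u v + ddist A v w := by rw [ha, hb]; push_cast; rfl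

private lemma ddist_le_seg {g : ℕ → V} {n i j : ℕ} (hp : NPath A g n)
    (hij : i ≤ j) (hjn : j ≤ n) : ddist A (g i) (g j) ≤ ((j - i : ℕ) : ℕ∞) := by
  apply ddist_le_of_path (m := j - i)
  apply hasPathN_iff.mpr
  refine ⟨fun t => g (i + min t (j - i)), ⟨?_, ?_⟩, ?_, ?_⟩
  · intro t ht
    show A (g (i + min t (j - i))) (g (i + min (t+1) (j - i)))
    rw [show min t (j - i) = t by omega, show min (t+1) (j-i) = t + 1 by omega,
      show i + (t+1) = (i + t) + 1 by omega]
    exact hp.1 (i + t) (by omega)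
  · intro x hx y hy hxy
    simp only [Set.mem_Iic] at hx hy
    have := hp.2 (Set.mem_Iic.mpr (by omega : i + min x (j-i) ≤ n))
      (Set.mem_Iic.mpr (by omega : i + min y (j-i) ≤ n)) hxy
    omega
  · simp
  · show g (i + min (j-i) (j-i)) = g j
    rw [show min (j-i) (j-i) = j - i by omega, show i + (j - i) = j by omega]

private lemma ddist_seg_lb {u v : V} {g : ℕ → V} {n i j : ℕ}
    (hmin : ∀ m, HasPathN A u v m → n ≤ m)
    (hp : NPath A g n) (h0 : g 0 = u) (hn : g n = v)
    (hd : ddist A u v = (n : ℕ∞))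
    (hij : i ≤ j) (hjn : j ≤ n) : ((j - i : ℕ) : ℕ∞) ≤ ddist A (g i) (g j) := by
  by_cases htop : ddist A (g i) (g j) = ⊤
  · simp [htop]
  obtain ⟨d, hdd, _, _⟩ := ddist_spec htop
  have t1 : ddist A u (g i) ≤ ((i : ℕ) : ℕ∞) := by
    have := ddist_le_seg hp (Nat.zero_le i) (le_trans hij hjn)
    rwa [h0, Nat.sub_zero] at this
  have t2 : ddist A (g j) v ≤ ((n - j : ℕ) : ℕ∞) := by
    have := ddist_le_seg hp hjn le_rfl
    rwa [hn] at this
  have htr : ddist A u v ≤ ddist A u (g i) + ddist A (g i) (g j) + ddist A (g j) v :=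
    le_trans (ddist_triangle u (g j) v) (add_le_add_left (ddist_triangle u (g i) (g j)) _)
  rw [hd, hdd] at htr
  have hfin : (n : ℕ∞) ≤ ((i : ℕ) : ℕ∞) + (d : ℕ∞) + ((n - j : ℕ) : ℕ∞) :=
    le_trans htr (add_le_add (add_le_add t1 le_rfl) t2)
  rw [hdd]
  have : n ≤ i + d + (n - j) := by exact_mod_cast hfin
  exact_mod_cast (by omega : j - i ≤ d)

private lemma ddist_le_one_of_arc (hloop : ∀ x : V, ¬ A x x) {u v : V} (h : A u v) :
    ddist A u v ≤ 1 := by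
  have huv : u ≠ v := fun he => hloop u (by rw [he] at h ⊢; exact h)
  apply ddist_le_of_path (m := 1)
  refine ⟨![u, v], ?_, rfl, rfl, ?_⟩
  · intro a b hab
    fin_cases a <;> fin_cases b <;> simp_all
  · intro i
    fin_cases i
    simpa using h

private lemma not_arc (hloop : ∀ x : V, ¬ A x x) {u v : V} (h : (2 : ℕ∞) ≤ ddist A u v) :
    ¬ A u v := by
  intro ha
  have := le_trans h (ddist_le_one_of_arc hloop ha)
  norm_num at this

private lemma qt_window (hqt : KQuasiTrans A k) {g : ℕ → V} {n : ℕ} (hp : NPath A g n)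
    (idx : ℕ → ℕ) (hle : ∀ t, t ≤ k → idx t ≤ n)
    (hinj : ∀ t1, t1 ≤ k → ∀ t2, t2 ≤ k → idx t1 = idx t2 → t1 = t2)
    (harc : ∀ t, t < k → A (g (idx t)) (g (idx (t+1)))) :
    A (g (idx 0)) (g (idx k)) ∨ A (g (idx k)) (g (idx 0)) := by
  have h := hqt (g (idx 0)) (g (idx k)) ?_
  · exact h
  apply hasPathN_iff.mpr
  refine ⟨fun t => g (idx (min t k)), ⟨?_, ?_⟩, ?_, ?_⟩
  · intro i hi
    show A (g (idx (min i k))) (g (idx (min (i+1) k)))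
    rw [show min i k = i by omega, show min (i+1) k = i + 1 by omega]
    exact harc i hi
  · intro x hx y hy hxy
    simp only [Set.mem_Iic] at hx hy
    have hval := hp.2 (Set.mem_Iic.mpr (hle _ (by omega))) (Set.mem_Iic.mpr (hle _ (by omega))) hxy
    have := hinj (min x k) (by omega) (min y k) (by omega) hval
    omega
  · show g (idx (min 0 k)) = g (idx 0)
    rw [show min 0 k = 0 by omega]
  · show g (idx (min k k)) = g (idx k)
    rw [show min k k = k by omega]

private lemma ML (hloop : ∀ x : V, ¬ A x x) (hk : 3 ≤ k) (hqt : KQuasiTrans A k)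
    {u v : V} {n : ℕ} (hd : ddist A u v = (n : ℕ∞)) (hn : k + 2 ≤ n) :
    ddist A v u ≤ 2 := by
  obtain ⟨n', hn', hpath, hmin⟩ :=
    ddist_spec (show ddist A u v ≠ ⊤ by rw [hd]; exact ENat.coe_ne_top n)
  have hnn : n = n' := by rw [hd] at hn'; exact_mod_cast hn'
  subst hnn
  obtain ⟨g, hp, h0, hgn⟩ := hasPathN_iff.mp hpath
  have seg_lb : ∀ i j, i ≤ j → j ≤ n → ((j - i : ℕ) : ℕ∞) ≤ ddist A (g i) (g j) :=
    fun i j h1 h2 => ddist_seg_lb hmin hp h0 hgn hd h1 h2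
  have noarc : ∀ i j, i ≤ j → j ≤ n → 2 ≤ j - i → ¬ A (g i) (g j) := by
    intro i j h1 h2 h3
    apply not_arc hloop
    refine le_trans ?_ (seg_lb i j h1 h2)
    exact_mod_cast h3
  have F1 : ∀ j, k ≤ j → j ≤ n → A (g j) (g (j - k)) := by
    intro j h1 h2
    have harc : ∀ t, t < k → A (g ((fun t => j - k + t) t)) (g ((fun t => j - k + t) (t+1))) := by
      intro t ht
      show A (g (j - k + t)) (g (j - k + (t+1)))
      rw [show j - k + (t+1) = (j - k + t) + 1 by omega]
      exact hp.1 (j - k + t) (by omega)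
    have hw := qt_window hqt hp (fun t => j - k + t)
      (by intro t ht; show j - k + t ≤ n; omega)
      (by intro t1 ht1 t2 ht2 he; omega) harc
    rw [show j - k + k = j by omega, show j - k + 0 = j - k by omega] at hw
    rcases hw with hc | hc
    · exact absurd hc (noarc (j - k) j (by omega) h2 (by omega))
    · exact hc
  have desc : ∀ m, 2 ≤ m → m ≤ n - k → A (g n) (g m) → A (g n) (g (m - 2)) := by
    intro m hm2 hmk hchord
    set idx : ℕ → ℕ :=
      fun t => if t = 0 then n else if t ≤ (k - m) + 1 then m + t - 1 else m + t - 2 - k with hidx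
    have hle : ∀ t, t ≤ k → idx t ≤ n := by
      intro t ht; simp only [hidx]; split_ifs <;> omega
    have hinj : ∀ t1, t1 ≤ k → ∀ t2, t2 ≤ k → idx t1 = idx t2 → t1 = t2 := by
      intro t1 ht1 t2 ht2 he; simp only [hidx] at he; split_ifs at he <;> omega
    have harc : ∀ t, t < k → A (g (idx t)) (g (idx (t+1))) := by
      intro t ht
      rcases Nat.eq_zero_or_pos t with rfl | htpos
      · simp only [hidx, if_pos rfl, if_neg (by omega : ¬ (0:ℕ)+1 = 0),
          if_pos (by omega : 0+1 ≤ (k-m)+1)]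
        rw [show m + (0+1) - 1 = m by omega]
        exact hchord
      · rcases lt_trichotomy t ((k - m) + 1) with hlt | heq | hgt
        · simp only [hidx, if_neg (by omega : ¬ t = 0), if_pos (by omega : t ≤ (k-m)+1),
            if_neg (by omega : ¬ t+1 = 0), if_pos (by omega : t+1 ≤ (k-m)+1)]
          rw [show m + (t+1) - 1 = (m + t - 1) + 1 by omega]
          exact hp.1 (m + t - 1) (by omega)
        · simp only [hidx, if_neg (by omega : ¬ t = 0), if_pos (by omega : t ≤ (k-m)+1),
            if_neg (by omega : ¬ t+1 = 0), if_neg (by omega : ¬ t+1 ≤ (k-m)+1)]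
          rw [show m + t - 1 = m + (k - m) by omega,
            show m + (t+1) - 2 - k = m + (k - m) - k by omega]
          exact F1 (m + (k - m)) (by omega) (by omega)
        · simp only [hidx, if_neg (by omega : ¬ t = 0), if_neg (by omega : ¬ t ≤ (k-m)+1),
            if_neg (by omega : ¬ t+1 = 0), if_neg (by omega : ¬ t+1 ≤ (k-m)+1)]
          rw [show m + (t+1) - 2 - k = (m + t - 2 - k) + 1 by omega]
          exact hp.1 (m + t - 2 - k) (by omega)
    have hw := qt_window hqt hp idx hle hinj harc
    have hi0 : idx 0 = n := by simp [hidx]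
    have hik : idx k = m - 2 := by
      simp only [hidx]
      rw [if_neg (by omega), if_neg (by omega)]
      omega
    rw [hi0, hik] at hw
    rcases hw with hc | hc
    · exact hc
    · exact absurd hc (noarc (m - 2) n (by omega) le_rfl (by omega))
  have chords : ∀ d m, m ≤ n - k → n - k - m = 2 * d → A (g n) (g m) := by
    intro d
    induction d with
    | zero =>
      intro m h1 h2
      have hm : m = n - k := by omega
      subst hm
      exact F1 n (by omega) le_rfl
    | succ d IH =>
      intro m h1 h2
      have hc := IH (m + 2) (by omega) (by omega)
      have := desc (m + 2) (by omega) (by omega) hc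
      rwa [show m + 2 - 2 = m by omega] at this
  rcases Nat.even_or_odd (n - k) with ⟨d, hd2⟩ | ⟨d, hd2⟩
  · have hc := chords d 0 (by omega) (by omega)
    have h1 : ddist A v u ≤ 1 := by
      have := ddist_le_one_of_arc hloop hc
      rwa [hgn, h0] at this
    exact le_trans h1 (by norm_num)
  · have hc1 := chords d 1 (by omega) (by omega)
    have hck : A (g n) (g k) := by
      set idx : ℕ → ℕ := fun t => if t = 0 then n else t with hidx
      have harc : ∀ t, t < k → A (g (idx t)) (g (idx (t+1))) := by
        intro t ht
        rcases Nat.eq_zero_or_pos t with rfl | htpos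
        · simp only [hidx, if_pos rfl, if_neg (by omega : ¬ (0:ℕ)+1 = 0)]
          exact hc1
        · simp only [hidx, if_neg (by omega : ¬ t = 0), if_neg (by omega : ¬ t+1 = 0)]
          exact hp.1 t (by omega)
      have hw := qt_window hqt hp idx
        (by intro t ht; simp only [hidx]; split_ifs <;> omega)
        (by intro t1 ht1 t2 ht2 he; simp only [hidx] at he; split_ifs at he <;> omega) harc
      have hi0 : idx 0 = n := by simp [hidx]
      have hik : idx k = k := by simp only [hidx]; rw [if_neg (by omega)]
      rw [hi0, hik] at hw
      rcases hw with hc | hc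
      · exact hc
      · exact absurd hc (noarc k n (by omega) le_rfl (by omega))
    have hk0 : A (g k) (g 0) := by
      have := F1 k le_rfl (by omega)
      rwa [Nat.sub_self] at this
    have t1 : ddist A v (g k) ≤ 1 := by
      have := ddist_le_one_of_arc hloop hck
      rwa [hgn] at this
    have t2 : ddist A (g k) u ≤ 1 := by
      have := ddist_le_one_of_arc hloop hk0
      rwa [h0] at this
    calc ddist A v u ≤ ddist A v (g k) + ddist A (g k) u := ddist_triangle _ _ _
      _ ≤ 1 + 1 := add_le_add t1 t2
      _ = 2 := by norm_num

private lemma claimT (hloop : ∀ x : V, ¬ A x x) (hk : 3 ≤ k) (hqt : KQuasiTrans A k)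
    {z s w : V} (hzs : ddist A z s ≤ ((k+1 : ℕ) : ℕ∞)) (hsw : ddist A s w ≤ 2)
    (hzw : ((k+2 : ℕ) : ℕ∞) ≤ ddist A z w) :
    ddist A w s ≤ ((k+1 : ℕ) : ℕ∞) := by
  have hsw' : ddist A s w ≤ ((2 : ℕ) : ℕ∞) := by exact_mod_cast hsw
  have hzs_ne : ddist A z s ≠ ⊤ := ne_top_of_le_ne_top (ENat.coe_ne_top _) hzs
  have hsw_ne : ddist A s w ≠ ⊤ := ne_top_of_le_ne_top (ENat.coe_ne_top _) hsw'
  obtain ⟨a, ha, hpa, hmina⟩ := ddist_spec hzs_ne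
  obtain ⟨b, hb, hpb, hminb⟩ := ddist_spec hsw_ne
  have haa : a ≤ k + 1 := by rw [ha] at hzs; exact_mod_cast hzs
  have hbb : b ≤ 2 := by rw [hb] at hsw'; exact_mod_cast hsw'
  have hab : k + 2 ≤ a + b := by
    have h3 := ddist_triangle (A := A) z s w
    rw [ha, hb] at h3
    have h4 := le_trans hzw h3
    exact_mod_cast h4
  obtain ⟨gQ, hpQ, hQ0, hQa⟩ := hasPathN_iff.mp hpa
  obtain ⟨gR, hpR, hR0, hRb⟩ := hasPathN_iff.mp hpb
  have hb1 : 1 ≤ b := by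
    rcases Nat.eq_zero_or_pos b with hb0 | h
    · exfalso
      have hsw0 : s = w := by rw [← hR0, ← hRb, hb0]
      rw [← hsw0] at hzw
      have h5 := le_trans hzw hzs
      have : (k + 2 : ℕ) ≤ (k + 1 : ℕ) := by exact_mod_cast h5
      omega
    · exact h
  have hQpre : ∀ c, c ≤ a → ddist A z (gQ c) ≤ ((c : ℕ) : ℕ∞) := by
    intro c hc
    have := ddist_le_seg hpQ (Nat.zero_le c) hc
    rwa [hQ0, Nat.sub_zero] at this
  have hzw_notle : ∀ c : ℕ, ddist A z w ≤ (c : ℕ∞) → k + 2 ≤ c := by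
    intro c hc
    have := le_trans hzw hc
    exact_mod_cast this
  set h : ℕ → V := fun t => if t ≤ k - b then gQ (a + b - k + t) else gR (t - (k - b)) with hh
  have harc : ∀ t, t < k → A (h t) (h (t+1)) := by
    intro t ht
    rcases lt_trichotomy t (k - b) with hlt | heq | hgt
    · simp only [hh, if_pos (by omega : t ≤ k - b), if_pos (by omega : t + 1 ≤ k - b)]
      rw [show a + b - k + (t+1) = (a + b - k + t) + 1 by omega]
      exact hpQ.1 (a + b - k + t) (by omega)
    · simp only [hh, if_pos (by omega : t ≤ k - b), if_neg (by omega : ¬ t + 1 ≤ k - b)]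
      rw [show a + b - k + t = a by omega, show t + 1 - (k - b) = 0 + 1 by omega, hQa, ← hR0]
      exact hpR.1 0 (by omega)
    · simp only [hh, if_neg (by omega : ¬ t ≤ k - b), if_neg (by omega : ¬ t + 1 ≤ k - b)]
      rw [show t + 1 - (k - b) = (t - (k - b)) + 1 by omega]
      exact hpR.1 (t - (k - b)) (by omega)
  have key : ∀ tq, tq ≤ k - b → ∀ r, 1 ≤ r → r ≤ b → gQ (a + b - k + tq) ≠ gR r := by
    intro tq htq r hr1 hrb he
    set c := a + b - k + tq with hc
    rcases Nat.lt_or_ge c a with hca | hca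
    · rcases Nat.lt_or_ge r b with hrb2 | hrb2
      · -- r = 1, b = 2 : arc gR r → gR b with r + 1 = b
        have harc2 : A (gR r) (gR (r+1)) := hpR.1 r (by omega)
        have hrr : r + 1 = b := by omega
        rw [← he, hrr, hRb] at harc2
        have hd1 : ddist A z w ≤ ((c : ℕ) : ℕ∞) + 1 :=
          le_trans (ddist_triangle z (gQ c) w)
            (add_le_add (hQpre c (by omega)) (ddist_le_one_of_arc hloop harc2))
        have hd2 : ddist A z w ≤ ((c + 1 : ℕ) : ℕ∞) := by
          refine le_trans hd1 (le_of_eq ?_)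
          push_cast
          ring
        have := hzw_notle _ hd2
        omega
      · -- r = b : gR r = w
        have hrr : r = b := by omega
        rw [hrr, hRb] at he
        have hd2 : ddist A z w ≤ ((c : ℕ) : ℕ∞) := he ▸ hQpre c (by omega)
        have := hzw_notle _ hd2
        omega
    · -- c = a : gQ c = s = gR 0
      have hca2 : c = a := by omega
      rw [hca2, hQa, ← hR0] at he
      have := hpR.2 (Set.mem_Iic.mpr (Nat.zero_le b)) (Set.mem_Iic.mpr hrb) he
      omega
  have hinj : ∀ t1, t1 ≤ k → ∀ t2, t2 ≤ k → h t1 = h t2 → t1 = t2 := by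
    intro t1 ht1 t2 ht2 he
    by_cases c1 : t1 ≤ k - b <;> by_cases c2 : t2 ≤ k - b
    · simp only [hh, if_pos c1, if_pos c2] at he
      have := hpQ.2 (Set.mem_Iic.mpr (by omega : a + b - k + t1 ≤ a))
        (Set.mem_Iic.mpr (by omega : a + b - k + t2 ≤ a)) he
      omega
    · exact absurd he (key t1 c1 (t2 - (k - b)) (by omega) (by omega) ∘ by
        simp only [hh, if_pos c1, if_neg c2]; exact fun x => x)
    · exact absurd he.symm (key t2 c2 (t1 - (k - b)) (by omega) (by omega) ∘ by
        simp only [hh, if_pos c2, if_neg c1]; exact fun x => x)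
    · simp only [hh, if_neg c1, if_neg c2] at he
      have := hpR.2 (Set.mem_Iic.mpr (by omega : t1 - (k - b) ≤ b))
        (Set.mem_Iic.mpr (by omega : t2 - (k - b) ≤ b)) he
      omega
  have hpath_h : HasPathN A (h 0) (h k) k := by
    apply hasPathN_iff.mpr
    refine ⟨fun t => h (min t k), ⟨?_, ?_⟩, ?_, ?_⟩
    · intro i hi
      show A (h (min i k)) (h (min (i+1) k))
      rw [show min i k = i by omega, show min (i+1) k = i+1 by omega]
      exact harc i hi
    · intro x hx y hy hxy
      simp only [Set.mem_Iic] at hx hy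
      have := hinj (min x k) (by omega) (min y k) (by omega) hxy
      omega
    · show h (min 0 k) = h 0
      rw [show min 0 k = 0 by omega]
    · show h (min k k) = h k
      rw [Nat.min_self]
  have h0v : h 0 = gQ (a + b - k) := by
    simp only [hh, if_pos (Nat.zero_le _)]
    rw [Nat.add_zero]
  have hkv : h k = w := by
    simp only [hh, if_neg (by omega : ¬ k ≤ k - b)]
    rw [show k - (k - b) = b by omega, hRb]
  rcases hqt _ _ hpath_h with hc | hc
  · exfalso
    rw [h0v, hkv] at hc
    have hd1 : ddist A z w ≤ ((a + b - k : ℕ) : ℕ∞) + 1 :=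
      le_trans (ddist_triangle z (gQ (a + b - k)) w)
        (add_le_add (hQpre _ (by omega)) (ddist_le_one_of_arc hloop hc))
    have hd2 : ddist A z w ≤ ((a + b - k + 1 : ℕ) : ℕ∞) := by
      refine le_trans hd1 (le_of_eq ?_)
      push_cast
      ring
    have := hzw_notle _ hd2
    omega
  · rw [h0v, hkv] at hc
    have hseg : ddist A (gQ (a + b - k)) s ≤ ((a - (a + b - k) : ℕ) : ℕ∞) := by
      have := ddist_le_seg hpQ (by omega : a + b - k ≤ a) le_rfl
      rwa [hQa] at this
    have hd1 : ddist A w s ≤ 1 + ((a - (a + b - k) : ℕ) : ℕ∞) :=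
      le_trans (ddist_triangle w (gQ (a + b - k)) s)
        (add_le_add (ddist_le_one_of_arc hloop hc) hseg)
    have heq2 : (1 : ℕ∞) + ((a - (a + b - k) : ℕ) : ℕ∞) = ((1 + (a - (a + b - k)) : ℕ) : ℕ∞) := by
      push_cast
      ring
    rw [heq2] at hd1
    refine le_trans hd1 ?_
    exact_mod_cast (by omega : 1 + (a - (a + b - k)) ≤ k + 1)

private lemma ddist_ge_of_not_le {u v : V} {c : ℕ} (hne : ddist A u v ≠ ⊤)
    (h : ¬ ddist A u v ≤ ((c : ℕ) : ℕ∞)) : ∃ N : ℕ, ddist A u v = (N : ℕ∞) ∧ c + 1 ≤ N := by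
  obtain ⟨N, hN, _, _⟩ := ddist_spec hne
  refine ⟨N, hN, ?_⟩
  by_contra hc
  push_neg at hc
  exact h (by rw [hN]; exact_mod_cast Nat.lt_succ_iff.mp hc)

private lemma ddist_trans_ne_top {u v w : V} (h1 : ddist A u v ≠ ⊤) (h2 : ddist A v w ≠ ⊤) :
    ddist A u w ≠ ⊤ := by
  intro hc
  have := ddist_triangle (A := A) u v w
  rw [hc] at this
  exact (WithTop.add_ne_top.mpr ⟨h1, h2⟩) (top_le_iff.mp this)

private lemma exists_serf [Fintype V] (hloop : ∀ x : V, ¬ A x x) (hk : 3 ≤ k)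
    (hqt : KQuasiTrans A k) {C : Set V} (hne : C.Nonempty)
    (hstrong : ∀ x ∈ C, ∀ y ∈ C, ddist A x y ≠ ⊤) :
    ∃ s ∈ C, ∀ u ∈ C, ddist A u s ≤ ((k : ℕ∞) + 1) := by
  have hcast : ((k + 1 : ℕ) : ℕ∞) = (k : ℕ∞) + 1 := by push_cast; ring
  obtain ⟨s, hs, hmax⟩ := Set.exists_max_image C
    (fun x => ({u | u ∈ C ∧ u ≠ x ∧ ddist A u x ≤ ((k+1 : ℕ) : ℕ∞)}).ncard) (Set.toFinite _) hne
  refine ⟨s, hs, ?_⟩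
  intro w hw
  rw [← hcast]
  by_contra hesc
  have hws_ne : ddist A w s ≠ ⊤ := hstrong w hw s hs
  obtain ⟨N, hN, hN2⟩ := ddist_ge_of_not_le hws_ne hesc
  have hsw2 : ddist A s w ≤ 2 := ML hloop hk hqt hN (by omega)
  have hsub : {u | u ∈ C ∧ u ≠ s ∧ ddist A u s ≤ ((k+1 : ℕ) : ℕ∞)} ⊆
      {u | u ∈ C ∧ u ≠ w ∧ ddist A u w ≤ ((k+1 : ℕ) : ℕ∞)} := by
    rintro x ⟨hxC, hxs, hxd⟩
    refine ⟨hxC, ?_, ?_⟩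
    · rintro rfl
      exact hesc hxd
    · by_contra hxw
      have hxw_ne : ddist A x w ≠ ⊤ := hstrong x hxC w hw
      obtain ⟨M, hM, hM2⟩ := ddist_ge_of_not_le hxw_ne hxw
      have := claimT hloop hk hqt hxd hsw2 (by rw [hM]; exact_mod_cast (by omega : k + 2 ≤ M))
      exact hesc this
  have hsne : s ≠ w := by
    rintro rfl
    rw [ddist_self] at hesc
    exact hesc zero_le'
  have hmem : s ∈ {u | u ∈ C ∧ u ≠ w ∧ ddist A u w ≤ ((k+1 : ℕ) : ℕ∞)} := by
    refine ⟨hs, hsne, le_trans hsw2 ?_⟩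
    exact_mod_cast (by omega : (2 : ℕ) ≤ k + 1)
  have hss : {u | u ∈ C ∧ u ≠ s ∧ ddist A u s ≤ ((k+1 : ℕ) : ℕ∞)} ⊂
      {u | u ∈ C ∧ u ≠ w ∧ ddist A u w ≤ ((k+1 : ℕ) : ℕ∞)} := by
    refine ⟨hsub, fun hcon => ?_⟩
    have := hcon hmem
    exact this.2.1 rfl
  have hlt := Set.ncard_lt_ncard hss (Set.toFinite _)
  have := hmax w hw
  try simp only at this hlt
  omega

private lemma exists_terminal [Fintype V] (u : V) :
    ∃ v : V, ddist A u v ≠ ⊤ ∧ ∀ w, ddist A v w ≠ ⊤ → ddist A w v ≠ ⊤ := by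
  obtain ⟨v, hv, hmin⟩ := Set.exists_min_image {x | ddist A u x ≠ ⊤}
    (fun x => ({y | ddist A x y ≠ ⊤}).ncard) (Set.toFinite _)
    ⟨u, by rw [Set.mem_setOf_eq, ddist_self]; exact ENat.zero_ne_top⟩
  refine ⟨v, hv, ?_⟩
  intro w hw
  by_contra hwv
  have hsub : {y | ddist A w y ≠ ⊤} ⊆ {y | ddist A v y ≠ ⊤} :=
    fun y hy => ddist_trans_ne_top hw hy
  have hvmem : v ∈ {y | ddist A v y ≠ ⊤} := by
    rw [Set.mem_setOf_eq, ddist_self]; exact ENat.zero_ne_top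
  have hss : {y | ddist A w y ≠ ⊤} ⊂ {y | ddist A v y ≠ ⊤} := by
    refine ⟨hsub, fun hcon => ?_⟩
    exact (hcon hvmem) hwv
  have hlt := Set.ncard_lt_ncard hss (Set.toFinite _)
  have huw : w ∈ {x | ddist A u x ≠ ⊤} := ddist_trans_ne_top hv hw
  have := hmin w huw
  try simp only at this hlt
  omega

end Aux

/-- odd `k ≥ 3`; every `k`-quasi-transitive digraph has a `(k+2)`-kernel. -/
theorem kqt_odd_kernel
    [Fintype V] (A : V → V → Prop) (hloop : ∀ v : V, ¬ A v v)
    (k : ℕ) (hk : 3 ≤ k) (hko : Odd k) (hqt : KQuasiTrans A k) :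
    ∃ S : Set V,
      (∀ u ∈ S, ∀ v ∈ S, u ≠ v → ((k : ℕ∞) + 2) ≤ ddist A u v) ∧
      (∀ u : V, u ∉ S → ∃ v ∈ S, ddist A u v ≤ ((k : ℕ∞) + 1)) := by
  classical
  by_cases hV : Nonempty V
  · obtain ⟨v0⟩ := hV
    set Cl : V → Set V := fun v => {y | ddist A v y ≠ ⊤} with hCl
    set Term : V → Prop := fun v => ∀ w, ddist A v w ≠ ⊤ → ddist A w v ≠ ⊤ with hTerm
    have hself : ∀ v, v ∈ Cl v := by
      intro v
      simp only [hCl, Set.mem_setOf_eq, ddist_self]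
      exact ENat.zero_ne_top
    have cl_strong : ∀ v, Term v → ∀ x ∈ Cl v, ∀ y ∈ Cl v, ddist A x y ≠ ⊤ := by
      intro v hv x hx y hy
      exact ddist_trans_ne_top (hv x hx) hy
    have cl_eq : ∀ v, Term v → ∀ x ∈ Cl v, Cl x = Cl v := by
      intro v hv x hx
      apply Set.eq_of_subset_of_subset
      · intro y hy
        exact ddist_trans_ne_top hx hy
      · intro y hy
        exact ddist_trans_ne_top (hv x hx) hy
    set pick : Set V → V := fun X =>
      if h : ∃ s, s ∈ X ∧ ∀ u ∈ X, ddist A u s ≤ (k : ℕ∞) + 1 then h.choose else v0 with hpick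
    have pick_spec : ∀ v, Term v →
        pick (Cl v) ∈ Cl v ∧ ∀ u ∈ Cl v, ddist A u (pick (Cl v)) ≤ (k : ℕ∞) + 1 := by
      intro v hv
      have hex : ∃ s, s ∈ Cl v ∧ ∀ u ∈ Cl v, ddist A u s ≤ (k : ℕ∞) + 1 := by
        obtain ⟨s, hs1, hs2⟩ := exists_serf hloop hk hqt ⟨v, hself v⟩ (cl_strong v hv)
        exact ⟨s, hs1, hs2⟩
      simp only [hpick, dif_pos hex]
      exact hex.choose_spec
    refine ⟨{x | ∃ v, Term v ∧ x = pick (Cl v)}, ?_, ?_⟩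
    · rintro x ⟨v1, hv1, rfl⟩ y ⟨v2, hv2, rfl⟩ hxy
      have hclne : Cl v1 ≠ Cl v2 := fun he => hxy (by rw [he])
      suffices hdd : ddist A (pick (Cl v1)) (pick (Cl v2)) = ⊤ by rw [hdd]; exact le_top
      by_contra hne
      have hp1 := (pick_spec v1 hv1).1
      have hp2 := (pick_spec v2 hv2).1
      have he1 : Cl (pick (Cl v1)) = Cl v1 := cl_eq v1 hv1 _ hp1
      have hmem : pick (Cl v2) ∈ Cl v1 := by
        rw [← he1]
        exact hne
      have he2 : Cl (pick (Cl v2)) = Cl v1 := cl_eq v1 hv1 _ hmem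
      have he3 : Cl (pick (Cl v2)) = Cl v2 := cl_eq v2 hv2 _ hp2
      exact hclne (by rw [← he2, he3])
    · intro u hu
      obtain ⟨v, huv, hv⟩ := exists_terminal (A := A) u
      refine ⟨pick (Cl v), ⟨v, hv, rfl⟩, ?_⟩
      have hp := pick_spec v hv
      by_cases hcase : u ∈ Cl v
      · exact hp.2 u hcase
      · have hus_ne : ddist A u (pick (Cl v)) ≠ ⊤ := ddist_trans_ne_top huv hp.1
        by_contra hgt
        have hgt' : ¬ ddist A u (pick (Cl v)) ≤ ((k + 1 : ℕ) : ℕ∞) := by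
          intro hc
          exact hgt (le_trans hc (le_of_eq (by push_cast; ring)))
        obtain ⟨N, hN, hN2⟩ := ddist_ge_of_not_le hus_ne hgt'
        have h2 := ML hloop hk hqt hN (by omega)
        have h2' : ddist A (pick (Cl v)) u ≤ ((2 : ℕ) : ℕ∞) := by exact_mod_cast h2
        have hne2 : ddist A (pick (Cl v)) u ≠ ⊤ := ne_top_of_le_ne_top (ENat.coe_ne_top _) h2'
        have hmem2 : u ∈ Cl (pick (Cl v)) := hne2
        rw [cl_eq v hv _ hp.1] at hmem2
        exact hcase hmem2
  · refine ⟨∅, ?_, ?_⟩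
    · rintro u hu
      exact absurd hu (by simp)
    · intro u _
      exact absurd ⟨u⟩ hV
end
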